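/- Mass conservation for the limit problem on a graph of finite total measure: if ν_G(V) < ∞ and u is a strong solution of u'(t) + ∂I_{K_∞^G}(u(t)) ∋ f(t), then for a.e. t, ∫_V u_t(t,x) dν_G(x) = ∫_V f(t,x) dν_G(x). -/
import Mathlib


open Filter MeasureTheory

lemma aux_summable14 {V : Type*} (g d : V → ℝ) (hd : ∀ x, 0 ≤ d x)
    (hg : Summable fun x => g x ^ 2 * d x) (hdf : Summable d) :
    Summable fun x => g x * d x := by
  apply Summable.of_abs
  apply Summable.of_nonneg_of_le (fun x => abs_nonneg _) (fun x => ?_)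
    ((hg.add hdf).div_const 2)
  rw [abs_mul, abs_of_nonneg (hd x)]
  have h1 : |g x| * d x ≤ (g x ^ 2 + 1) / 2 * d x := by
    have := hd x
    nlinarith [sq_nonneg (|g x| - 1), sq_abs (g x)]
  calc |g x| * d x ≤ (g x ^ 2 + 1) / 2 * d x := h1
    _ = (g x ^ 2 * d x + d x) / 2 := by ring

/-- Mass conservation for the limit sandpile problem when ν_G(V) < ∞. -/
theorem stmt14 {V : Type*} [Countable V] (w : V → V → ℝ) (d : V → ℝ)
    (hw : ∀ x y, 0 ≤ w x y) (hsymm : ∀ x y, w x y = w y x)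
    (hd : ∀ x, d x = ∑' y, w x y) (hdpos : ∀ x, 0 < d x)
    (hfin : Summable d)
    (u ut f : ℝ → V → ℝ)
    (hcont : ∀ x, Continuous fun t => u t x)
    (hderiv : ∀ x, ∀ᵐ t ∂(volume : Measure ℝ), HasDerivAt (fun s => u s x) (ut t x) t)
    (hf2 : ∀ᵐ t ∂(volume : Measure ℝ), Summable fun x => (f t x) ^ 2 * d x)
    (hut2 : ∀ᵐ t ∂(volume : Measure ℝ), Summable fun x => (ut t x) ^ 2 * d x)
    (hsol : ∀ᵐ t ∂(volume : Measure ℝ),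
      ((Summable fun x => (u t x) ^ 2 * d x) ∧ ∀ x y, w x y ≠ 0 → |u t y - u t x| ≤ 1) ∧
      ∀ v : V → ℝ, (Summable fun x => (v x) ^ 2 * d x) →
        (∀ x y, w x y ≠ 0 → |v y - v x| ≤ 1) →
          ∑' x, (f t x - ut t x) * (v x - u t x) * d x ≤ 0) :
    ∀ᵐ t ∂(volume : Measure ℝ), ∑' x, ut t x * d x = ∑' x, f t x * d x := by
  have hd0 : ∀ x, 0 ≤ d x := fun x => (hdpos x).le
  filter_upwards [hf2, hut2, hsol] with t hft hutt hsolt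
  obtain ⟨⟨hu2, hlip⟩, hmax⟩ := hsolt
  have hfd : Summable fun x => f t x * d x := aux_summable14 _ _ hd0 hft hfin
  have hutd : Summable fun x => ut t x * d x := aux_summable14 _ _ hd0 hutt hfin
  have hud : Summable fun x => u t x * d x := aux_summable14 _ _ hd0 hu2 hfin
  have hsum1 : Summable fun x => (u t x + 1) ^ 2 * d x := by
    have e : (fun x => (u t x + 1) ^ 2 * d x)
        = fun x => u t x ^ 2 * d x + (2 * (u t x * d x) + d x) := by
      funext x; ring
    rw [e]; exact hu2.add ((hud.mul_left 2).add hfin)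
  have hsum2 : Summable fun x => (u t x - 1) ^ 2 * d x := by
    have e : (fun x => (u t x - 1) ^ 2 * d x)
        = fun x => u t x ^ 2 * d x + ((-2) * (u t x * d x) + d x) := by
      funext x; ring
    rw [e]; exact hu2.add ((hud.mul_left (-2)).add hfin)
  have h1 := hmax (fun x => u t x + 1) hsum1 (fun x y h => by simpa using hlip x y h)
  have h2 := hmax (fun x => u t x - 1) hsum2 (fun x y h => by simpa using hlip x y h)
  have h1' : (∑' x, (f t x * d x - ut t x * d x)) ≤ 0 := by
    calc (∑' x, (f t x * d x - ut t x * d x))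
        = ∑' x, (f t x - ut t x) * ((fun x => u t x + 1) x - u t x) * d x :=
          tsum_congr fun x => by simp; ring
      _ ≤ 0 := h1
  have h2' : (0 : ℝ) ≤ ∑' x, (f t x * d x - ut t x * d x) := by
    have hneg : (∑' x, -(f t x * d x - ut t x * d x)) ≤ 0 := by
      calc (∑' x, -(f t x * d x - ut t x * d x))
          = ∑' x, (f t x - ut t x) * ((fun x => u t x - 1) x - u t x) * d x :=
            tsum_congr fun x => by simp; ring
        _ ≤ 0 := h2
    rw [tsum_neg] at hneg
    linarith
  have heq : (∑' x, (f t x * d x - ut t x * d x)) = 0 := le_antisymm h1' h2'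
  rw [Summable.tsum_sub hfd hutd] at heq
  linarith
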